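/- Let R₁, R₂, R₃, β > 0. Let m be a Borel probability measure on ℝ^d supported in B̄(R₁), let ν be a Borel probability measure on parameter space supported in 𝔖(R₂), and let a ∈ B̄(R₃). Then the map x ↦ ⟨a, Γ(x, m, ν)⟩ is differentiable on ℝ^d and its gradient satisfies ‖∇_x ⟨a, Γ(x, m, ν)⟩‖ ≤ 2 β R₁² R₂⁴ R₃ for every x ∈ ℝ^d. -/

import Mathlib

open MeasureTheory
open scoped RealInnerProductSpace

/-- The normalisation constant `γ₂(z, μ) = ∫ exp⟨z,y⟩ dμ(y)`. -/
noncomputable def gamma2 {d : ℕ} (z : EuclideanSpace ℝ (Fin d))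
    (μ : Measure (EuclideanSpace ℝ (Fin d))) : ℝ :=
  ∫ y, Real.exp ⟪z, y⟫ ∂μ

/-- The attention map `γ(z, μ) = (∫ exp⟨z,y⟩ • y dμ(y)) / γ₂(z, μ)`. -/
noncomputable def gammaAttn {d : ℕ} (z : EuclideanSpace ℝ (Fin d))
    (μ : Measure (EuclideanSpace ℝ (Fin d))) : EuclideanSpace ℝ (Fin d) :=
  (gamma2 z μ)⁻¹ • ∫ y, Real.exp ⟪z, y⟫ • y ∂μ

open Matrix


/-- Matrices carry the product (Borel) measurable structure. -/
noncomputable instance matrixMeasurableSpace {k d : ℕ} :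
    MeasurableSpace (Matrix (Fin k) (Fin d) ℝ) :=
  (inferInstance : MeasurableSpace (Fin k → Fin d → ℝ))

/-- A transformer parameter `θ = (θ_Q, θ_K, θ_V, θ_O)`, four `k × d` real matrices. -/
abbrev Param (k d : ℕ) : Type :=
  Matrix (Fin k) (Fin d) ℝ × Matrix (Fin k) (Fin d) ℝ ×
    Matrix (Fin k) (Fin d) ℝ × Matrix (Fin k) (Fin d) ℝ

/-- Frobenius norm of a matrix. -/
noncomputable def frobNorm {k d : ℕ} (A : Matrix (Fin k) (Fin d) ℝ) : ℝ :=
  Real.sqrt (∑ i, ∑ j, (A i j) ^ 2)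

/-- `𝔖(R)`: the set of parameters each of whose four blocks has Frobenius norm at most `R`. -/
def paramBall (k d : ℕ) (R : ℝ) : Set (Param k d) :=
  {θ | frobNorm θ.1 ≤ R ∧ frobNorm θ.2.1 ≤ R ∧ frobNorm θ.2.2.1 ≤ R ∧ frobNorm θ.2.2.2 ≤ R}

/-- A single attention head: `θ_Oᵀ θ_V γ(β θ_Kᵀ θ_Q x, m)`. -/
noncomputable def attnHead {k d : ℕ} (β : ℝ) (x : EuclideanSpace ℝ (Fin d))
    (m : MeasureTheory.Measure (EuclideanSpace ℝ (Fin d))) (θ : Param k d) :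
    EuclideanSpace ℝ (Fin d) :=
  Matrix.toEuclideanLin (θ.2.2.2ᵀ * θ.2.2.1)
    (gammaAttn (β • Matrix.toEuclideanLin (θ.2.1ᵀ * θ.1) x) m)

/-- The multi-head attention velocity field `Γ(x, m, ν) = ∫ θ_Oᵀ θ_V γ(β θ_Kᵀ θ_Q x, m) dν(θ)`. -/
noncomputable def attnGamma {k d : ℕ} (β : ℝ) (x : EuclideanSpace ℝ (Fin d))
    (m : MeasureTheory.Measure (EuclideanSpace ℝ (Fin d)))
    (ν : MeasureTheory.Measure (Param k d)) : EuclideanSpace ℝ (Fin d) :=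
  ∫ θ, attnHead β x m θ ∂ν

namespace Stmt13Aux


set_option synthInstance.maxHeartbeats 1000000
set_option maxHeartbeats 1000000

lemma continuous_clm_apply₂ {X A B : Type*} [TopologicalSpace X] [SeminormedAddCommGroup A]
    [SeminormedAddCommGroup B] [NormedSpace ℝ A] [NormedSpace ℝ B]
    {f : X → A →L[ℝ] B} {g : X → A} (hf : Continuous f) (hg : Continuous g) :
    Continuous fun x => f x (g x) :=
  isBoundedBilinearMap_apply.continuous.comp (hf.prodMk hg)

variable {d : ℕ} {G : Type*} [NormedAddCommGroup G] [NormedSpace ℝ G] [CompleteSpace G]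

lemma ae_of_measure_eq_one {α : Type*} [MeasurableSpace α] {μ : Measure α} [IsProbabilityMeasure μ]
    {s : Set α} (hs : MeasurableSet s) (h : μ s = 1) : ∀ᵐ y ∂μ, y ∈ s := by
  rw [ae_iff]
  have : {a | ¬ a ∈ s} = sᶜ := rfl
  rw [this, measure_compl hs (by simp), h, measure_univ]
  simp

variable {m : Measure (EuclideanSpace ℝ (Fin d))} [IsProbabilityMeasure m] {R : ℝ}

lemma ae_norm_le (hm : m (Metric.closedBall 0 R) = 1) : ∀ᵐ y ∂m, ‖y‖ ≤ R := by
  filter_upwards [ae_of_measure_eq_one measurableSet_closedBall hm] with y hy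
  simpa [Metric.mem_closedBall, dist_zero_right] using hy

lemma integrable_exp_smul (hae : ∀ᵐ y ∂m, ‖y‖ ≤ R)
    {c : EuclideanSpace ℝ (Fin d) → G} (hc : Continuous c) {C : ℝ}
    (hC : ∀ y : EuclideanSpace ℝ (Fin d), ‖y‖ ≤ R → ‖c y‖ ≤ C)
    (z : EuclideanSpace ℝ (Fin d)) :
    Integrable (fun y => Real.exp ⟪z, y⟫ • c y) m := by
  apply Integrable.mono' (integrable_const (Real.exp (‖z‖ * R) * C))
  · exact ((Real.continuous_exp.comp (continuous_const.inner continuous_id)).smul hc).aestronglyMeasurable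
  · filter_upwards [hae] with y hy
    rw [norm_smul, Real.norm_eq_abs, abs_of_pos (Real.exp_pos _)]
    have h1 : Real.exp ⟪z, y⟫ ≤ Real.exp (‖z‖ * R) := by
      apply Real.exp_le_exp.2
      calc ⟪z, y⟫ ≤ ‖z‖ * ‖y‖ := real_inner_le_norm z y
        _ ≤ ‖z‖ * R := by nlinarith [norm_nonneg z]
    exact mul_le_mul h1 (hC y hy) (norm_nonneg _) (Real.exp_pos _).le

lemma hasFDerivAt_exp_smul (c : EuclideanSpace ℝ (Fin d) → G) (y : EuclideanSpace ℝ (Fin d))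
    (z : EuclideanSpace ℝ (Fin d)) :
    HasFDerivAt (fun w => Real.exp ⟪w, y⟫ • c y)
      (Real.exp ⟪z, y⟫ • ((innerSL ℝ y).smulRight (c y))) z := by
  have h1 : HasFDerivAt (fun w : EuclideanSpace ℝ (Fin d) => ⟪w, y⟫) (innerSL ℝ y) z := by
    have : (fun w : EuclideanSpace ℝ (Fin d) => ⟪w, y⟫) = fun w => innerSL ℝ y w := by
      funext w; simp only [innerSL_apply_apply]; exact (real_inner_comm w y).symm
    rw [this]; exact (innerSL ℝ y).hasFDerivAt
  have h2 := (h1.exp).smul_const (c y)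
  refine h2.congr_fderiv ?_
  ext h
  simp [smul_smul, mul_comm]

lemma hasFDerivAt_integral_exp_smul (hR : 0 ≤ R) (hae : ∀ᵐ y ∂m, ‖y‖ ≤ R)
    {c : EuclideanSpace ℝ (Fin d) → G} (hc : Continuous c) {C : ℝ}
    (hC : ∀ y : EuclideanSpace ℝ (Fin d), ‖y‖ ≤ R → ‖c y‖ ≤ C)
    (z : EuclideanSpace ℝ (Fin d)) :
    HasFDerivAt (fun w => ∫ y, Real.exp ⟪w, y⟫ • c y ∂m)
      (∫ y, Real.exp ⟪z, y⟫ • ((innerSL ℝ y).smulRight (c y)) ∂m) z := by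
  have hcont : ∀ w : EuclideanSpace ℝ (Fin d),
      Continuous (fun y : EuclideanSpace ℝ (Fin d) => Real.exp ⟪w, y⟫ • c y) := fun w =>
    (Real.continuous_exp.comp (continuous_const.inner continuous_id)).smul hc
  have hC' : 0 ≤ C := le_trans (norm_nonneg _) (hC 0 (by simpa using hR))
  have key := hasFDerivAt_integral_of_dominated_loc_of_lip
    (F := fun w y => Real.exp ⟪w, y⟫ • c y)
    (F' := fun y => Real.exp ⟪z, y⟫ • ((innerSL ℝ y).smulRight (c y)))
    (x₀ := z) (bound := fun _ => R * Real.exp ((‖z‖ + 1) * R) * C) (s := Metric.ball z 1) (Metric.ball_mem_nhds z zero_lt_one)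
    (Filter.Eventually.of_forall fun w => (hcont w).aestronglyMeasurable)
    (integrable_exp_smul hae hc hC z)
    ?_ ?_ (integrable_const _) ?_
  · exact key.2
  · -- measurability of F'
    apply Continuous.aestronglyMeasurable
    apply Continuous.smul (Real.continuous_exp.comp (continuous_const.inner continuous_id))
    -- y ↦ (innerSL ℝ y).smulRight (c y)
    exact continuous_clm_apply₂
      ((ContinuousLinearMap.smulRightL ℝ (EuclideanSpace ℝ (Fin d)) G).continuous.comp
        (innerSL ℝ).continuous) hc
  · -- Lipschitz
    filter_upwards [hae] with y hy
    apply Convex.lipschitzOnWith_of_nnnorm_hasFDerivWithin_le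
      (f' := fun w => Real.exp ⟪w, y⟫ • ((innerSL ℝ y).smulRight (c y)))
      (fun w _ => (hasFDerivAt_exp_smul c y w).hasFDerivWithinAt) ?_ (convex_ball z 1)
    intro w hw
    rw [← NNReal.coe_le_coe, coe_nnnorm, Real.coe_nnabs]
    show ‖Real.exp ⟪w, y⟫ • ((innerSL ℝ y).smulRight (c y))‖ ≤ _
    have hns := norm_smul (Real.exp ⟪w, y⟫) ((innerSL ℝ y).smulRight (c y))
    rw [hns, Real.norm_eq_abs, abs_of_pos (Real.exp_pos _)]
    have hb : ‖(innerSL ℝ y).smulRight (c y)‖ ≤ R * C := by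
      rw [ContinuousLinearMap.norm_smulRight_apply, innerSL_apply_norm]
      exact mul_le_mul hy (hC y hy) (norm_nonneg _) hR
    have he : Real.exp ⟪w, y⟫ ≤ Real.exp ((‖z‖ + 1) * R) := by
      apply Real.exp_le_exp.2
      have hwle : ‖w‖ ≤ ‖z‖ + 1 := by
        have := mem_ball_iff_norm.1 hw
        have : ‖w‖ - ‖z‖ ≤ ‖w - z‖ := norm_sub_norm_le w z
        have h2 := mem_ball_iff_norm.1 hw
        linarith
      calc ⟪w, y⟫ ≤ ‖w‖ * ‖y‖ := real_inner_le_norm w y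
        _ ≤ (‖z‖ + 1) * R := by
          apply mul_le_mul hwle hy (norm_nonneg _)
          linarith [norm_nonneg z]
    calc Real.exp ⟪w, y⟫ * ‖(innerSL ℝ y).smulRight (c y)‖
        ≤ Real.exp ((‖z‖ + 1) * R) * (R * C) :=
          mul_le_mul he hb (norm_nonneg _) (Real.exp_pos _).le
      _ = |R * Real.exp ((‖z‖ + 1) * R) * C| := by
          rw [abs_of_nonneg (by positivity)]; ring
  · exact Filter.Eventually.of_forall fun y => hasFDerivAt_exp_smul c y z


/-! ### The attention map γ -/

variable (m) in
/-- `V(z) = ∫ exp⟪z,y⟫ • y dm`. -/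
noncomputable def Vint (z : EuclideanSpace ℝ (Fin d)) : EuclideanSpace ℝ (Fin d) :=
  ∫ y, Real.exp ⟪z, y⟫ • y ∂m

variable (m) in
/-- derivative of `gamma2 · m`. -/
noncomputable def DNmap (z : EuclideanSpace ℝ (Fin d)) :
    EuclideanSpace ℝ (Fin d) →L[ℝ] ℝ :=
  ∫ y, Real.exp ⟪z, y⟫ • ((innerSL ℝ y).smulRight (1 : ℝ)) ∂m

variable (m) in
/-- derivative of `Vint m`. -/
noncomputable def DVmap (z : EuclideanSpace ℝ (Fin d)) :
    EuclideanSpace ℝ (Fin d) →L[ℝ] EuclideanSpace ℝ (Fin d) :=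
  ∫ y, Real.exp ⟪z, y⟫ • ((innerSL ℝ y).smulRight y) ∂m

variable (m) in
/-- derivative of `gammaAttn · m`. -/
noncomputable def Dgamma (z : EuclideanSpace ℝ (Fin d)) :
    EuclideanSpace ℝ (Fin d) →L[ℝ] EuclideanSpace ℝ (Fin d) :=
  (gamma2 z m)⁻¹ • DVmap m z +
    ((-(gamma2 z m ^ 2)⁻¹) • DNmap m z).smulRight (Vint m z)

lemma gamma2_eq (z : EuclideanSpace ℝ (Fin d)) :
    gamma2 z m = ∫ y, Real.exp ⟪z, y⟫ • (1 : ℝ) ∂m := by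
  simp [gamma2, smul_eq_mul]

lemma integrable_exp (hae : ∀ᵐ y ∂m, ‖y‖ ≤ R) (z : EuclideanSpace ℝ (Fin d)) :
    Integrable (fun y => Real.exp ⟪z, y⟫) m := by
  have := integrable_exp_smul (G := ℝ) hae (c := fun _ => (1 : ℝ)) continuous_const
    (C := 1) (fun y _ => by simp) z
  simpa [smul_eq_mul] using this

lemma gamma2_pos (hae : ∀ᵐ y ∂m, ‖y‖ ≤ R) (z : EuclideanSpace ℝ (Fin d)) :
    0 < gamma2 z m :=
  integral_exp_pos (integrable_exp hae z)

lemma norm_integral_exp_smul_le (hae : ∀ᵐ y ∂m, ‖y‖ ≤ R)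
    {c : EuclideanSpace ℝ (Fin d) → G} {C : ℝ}
    (hC : ∀ᵐ y ∂m, ‖c y‖ ≤ C) (z : EuclideanSpace ℝ (Fin d)) :
    ‖∫ y, Real.exp ⟪z, y⟫ • c y ∂m‖ ≤ gamma2 z m * C := by
  have hint : Integrable (fun y => Real.exp ⟪z, y⟫ * C) m :=
    (integrable_exp hae z).mul_const C
  have hb : ∀ᵐ y ∂m, ‖Real.exp ⟪z, y⟫ • c y‖ ≤ Real.exp ⟪z, y⟫ * C := by
    filter_upwards [hC] with y hy
    rw [norm_smul, Real.norm_eq_abs, abs_of_pos (Real.exp_pos _)]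
    exact mul_le_mul_of_nonneg_left hy (Real.exp_pos _).le
  calc ‖∫ y, Real.exp ⟪z, y⟫ • c y ∂m‖ ≤ ∫ y, Real.exp ⟪z, y⟫ * C ∂m :=
        norm_integral_le_of_norm_le hint hb
    _ = gamma2 z m * C := by rw [integral_mul_const]; rfl

lemma hasFDerivAt_gamma2 (hR : 0 ≤ R) (hae : ∀ᵐ y ∂m, ‖y‖ ≤ R) (z : EuclideanSpace ℝ (Fin d)) :
    HasFDerivAt (fun w => gamma2 w m) (DNmap m z) z := by
  have h := hasFDerivAt_integral_exp_smul (G := ℝ) hR hae (c := fun _ => (1 : ℝ))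
    continuous_const (C := 1) (fun y _ => by simp) z
  have : (fun w => ∫ y, Real.exp ⟪w, y⟫ • (1 : ℝ) ∂m) = fun w => gamma2 w m := by
    funext w; exact (gamma2_eq w).symm
  rw [this] at h
  exact h

lemma hasFDerivAt_Vint (hR : 0 ≤ R) (hae : ∀ᵐ y ∂m, ‖y‖ ≤ R) (z : EuclideanSpace ℝ (Fin d)) :
    HasFDerivAt (fun w => Vint m w) (DVmap m z) z :=
  hasFDerivAt_integral_exp_smul hR hae continuous_id (C := R) (fun y hy => hy) z

lemma continuous_c1 : Continuous fun y : EuclideanSpace ℝ (Fin d) =>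
    (innerSL ℝ y).smulRight (1 : ℝ) :=
  continuous_clm_apply₂
    ((ContinuousLinearMap.smulRightL ℝ (EuclideanSpace ℝ (Fin d)) ℝ).continuous.comp
      (innerSL ℝ).continuous) continuous_const

lemma continuous_c2 : Continuous fun y : EuclideanSpace ℝ (Fin d) =>
    (innerSL ℝ y).smulRight y :=
  continuous_clm_apply₂
    ((ContinuousLinearMap.smulRightL ℝ (EuclideanSpace ℝ (Fin d))
      (EuclideanSpace ℝ (Fin d))).continuous.comp (innerSL ℝ).continuous) continuous_id

lemma norm_c1_le {y : EuclideanSpace ℝ (Fin d)} (hy : ‖y‖ ≤ R) :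
    ‖(innerSL ℝ y).smulRight (1 : ℝ)‖ ≤ R := by
  rw [ContinuousLinearMap.norm_smulRight_apply, innerSL_apply_norm]
  simpa using hy

lemma norm_c2_le (hR : 0 ≤ R) {y : EuclideanSpace ℝ (Fin d)} (hy : ‖y‖ ≤ R) :
    ‖(innerSL ℝ y).smulRight y‖ ≤ R * R := by
  rw [ContinuousLinearMap.norm_smulRight_apply, innerSL_apply_norm]
  exact mul_le_mul hy hy (norm_nonneg _) hR

lemma continuous_DNmap (hR : 0 ≤ R) (hae : ∀ᵐ y ∂m, ‖y‖ ≤ R) :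
    Continuous fun z => DNmap m z := by
  rw [continuous_iff_continuousAt]
  intro z
  exact (hasFDerivAt_integral_exp_smul hR hae continuous_c1 (C := R)
    (fun y hy => norm_c1_le hy) z).continuousAt

lemma continuous_DVmap (hR : 0 ≤ R) (hae : ∀ᵐ y ∂m, ‖y‖ ≤ R) :
    Continuous fun z => DVmap m z := by
  rw [continuous_iff_continuousAt]
  intro z
  exact (hasFDerivAt_integral_exp_smul hR hae continuous_c2 (C := R * R)
    (fun y hy => norm_c2_le hR hy) z).continuousAt

lemma continuous_gamma2 (hR : 0 ≤ R) (hae : ∀ᵐ y ∂m, ‖y‖ ≤ R) :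
    Continuous fun z => gamma2 z m := by
  rw [continuous_iff_continuousAt]
  intro z
  exact (hasFDerivAt_gamma2 hR hae z).continuousAt

lemma continuous_Vint (hR : 0 ≤ R) (hae : ∀ᵐ y ∂m, ‖y‖ ≤ R) :
    Continuous fun z => Vint m z := by
  rw [continuous_iff_continuousAt]
  intro z
  exact (hasFDerivAt_Vint hR hae z).continuousAt

lemma hasFDerivAt_gammaAttn (hR : 0 ≤ R) (hae : ∀ᵐ y ∂m, ‖y‖ ≤ R)
    (z : EuclideanSpace ℝ (Fin d)) :
    HasFDerivAt (fun w => gammaAttn w m) (Dgamma m z) z := by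
  have hN := hasFDerivAt_gamma2 hR hae z
  have hV := hasFDerivAt_Vint hR hae z
  have hNz := (gamma2_pos hae z).ne'
  have hinv : HasFDerivAt (fun w => (gamma2 w m)⁻¹)
      ((-(gamma2 z m ^ 2)⁻¹) • DNmap m z) z :=
    (hasDerivAt_inv hNz).comp_hasFDerivAt z hN
  have := hinv.smul hV
  exact this

lemma norm_gammaAttn_le (hR : 0 ≤ R) (hae : ∀ᵐ y ∂m, ‖y‖ ≤ R)
    (z : EuclideanSpace ℝ (Fin d)) : ‖gammaAttn z m‖ ≤ R := by
  have hN := gamma2_pos hae z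
  have hV : ‖Vint m z‖ ≤ gamma2 z m * R :=
    norm_integral_exp_smul_le hae hae z
  have : ‖gammaAttn z m‖ = (gamma2 z m)⁻¹ * ‖Vint m z‖ := by
    rw [gammaAttn, norm_smul, Real.norm_eq_abs, abs_of_pos (inv_pos.2 hN)]
    rfl
  rw [this, inv_mul_le_iff₀ hN]
  linarith [hV]

lemma norm_Dgamma_le (hR : 0 ≤ R) (hae : ∀ᵐ y ∂m, ‖y‖ ≤ R)
    (z : EuclideanSpace ℝ (Fin d)) : ‖Dgamma m z‖ ≤ 2 * R ^ 2 := by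
  have hN := gamma2_pos hae z
  apply ContinuousLinearMap.opNorm_le_bound _ (by positivity)
  intro h
  have hDV : ‖DVmap m z h‖ ≤ gamma2 z m * (R * R * ‖h‖) := by
    have hint : Integrable (fun y => Real.exp ⟪z, y⟫ • ((innerSL ℝ y).smulRight y)) m :=
      integrable_exp_smul hae continuous_c2 (C := R * R) (fun y hy => norm_c2_le hR hy) z
    rw [DVmap, ContinuousLinearMap.integral_apply hint h]
    have : (fun y => (Real.exp ⟪z, y⟫ • ((innerSL ℝ y).smulRight y)) h)
        = fun y => Real.exp ⟪z, y⟫ • (⟪y, h⟫ • y) := by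
      funext y; simp
    rw [this]
    apply norm_integral_exp_smul_le hae
    filter_upwards [hae] with y hy
    rw [norm_smul, Real.norm_eq_abs]
    calc |⟪y, h⟫| * ‖y‖ ≤ ‖y‖ * ‖h‖ * ‖y‖ := by
          apply mul_le_mul_of_nonneg_right (abs_real_inner_le_norm y h) (norm_nonneg _)
      _ = ‖y‖ * ‖y‖ * ‖h‖ := by ring
      _ ≤ R * R * ‖h‖ :=
          mul_le_mul_of_nonneg_right (mul_le_mul hy hy (norm_nonneg _) hR) (norm_nonneg _)
  have hDN : ‖DNmap m z h‖ ≤ gamma2 z m * (R * ‖h‖) := by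
    have hint : Integrable (fun y => Real.exp ⟪z, y⟫ • ((innerSL ℝ y).smulRight (1:ℝ))) m :=
      integrable_exp_smul hae continuous_c1 (C := R) (fun y hy => norm_c1_le hy) z
    rw [DNmap, ContinuousLinearMap.integral_apply hint h]
    have : (fun y => (Real.exp ⟪z, y⟫ • ((innerSL ℝ y).smulRight (1:ℝ))) h)
        = fun y => Real.exp ⟪z, y⟫ • (⟪y, h⟫ • (1:ℝ)) := by
      funext y; simp
    rw [this]
    apply norm_integral_exp_smul_le hae
    filter_upwards [hae] with y hy
    rw [norm_smul, Real.norm_eq_abs]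
    simp only [norm_one, mul_one, Real.norm_eq_abs]
    calc |⟪y, h⟫| ≤ ‖y‖ * ‖h‖ := abs_real_inner_le_norm y h
      _ ≤ R * ‖h‖ := mul_le_mul_of_nonneg_right hy (norm_nonneg _)
  have hV : ‖Vint m z‖ ≤ gamma2 z m * R := norm_integral_exp_smul_le hae hae z
  have happ : Dgamma m z h = (gamma2 z m)⁻¹ • DVmap m z h +
      ((-(gamma2 z m ^ 2)⁻¹) * DNmap m z h) • Vint m z := by
    simp [Dgamma, ContinuousLinearMap.smulRight_apply, ContinuousLinearMap.add_apply,
      ContinuousLinearMap.smul_apply, smul_smul]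
  rw [happ]
  calc ‖(gamma2 z m)⁻¹ • DVmap m z h +
        ((-(gamma2 z m ^ 2)⁻¹) * DNmap m z h) • Vint m z‖
      ≤ ‖(gamma2 z m)⁻¹ • DVmap m z h‖ +
        ‖((-(gamma2 z m ^ 2)⁻¹) * DNmap m z h) • Vint m z‖ := norm_add_le _ _
    _ ≤ (gamma2 z m)⁻¹ * (gamma2 z m * (R * R * ‖h‖)) +
        (gamma2 z m ^ 2)⁻¹ * (gamma2 z m * (R * ‖h‖)) * (gamma2 z m * R) := by
        apply add_le_add
        · rw [norm_smul, Real.norm_eq_abs, abs_of_pos (inv_pos.2 hN)]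
          exact mul_le_mul_of_nonneg_left hDV (inv_nonneg.2 hN.le)
        · rw [norm_smul, Real.norm_eq_abs, abs_mul, abs_neg, abs_inv,
            abs_of_pos (pow_pos hN 2)]
          have h1 : |DNmap m z h| * ‖Vint m z‖ ≤ (gamma2 z m * (R * ‖h‖)) * (gamma2 z m * R) :=
            mul_le_mul hDN hV (norm_nonneg _)
              (mul_nonneg hN.le (mul_nonneg hR (norm_nonneg _)))
          calc (gamma2 z m ^ 2)⁻¹ * |DNmap m z h| * ‖Vint m z‖
              = (gamma2 z m ^ 2)⁻¹ * (|DNmap m z h| * ‖Vint m z‖) := by ring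
            _ ≤ (gamma2 z m ^ 2)⁻¹ * ((gamma2 z m * (R * ‖h‖)) * (gamma2 z m * R)) :=
                mul_le_mul_of_nonneg_left h1 (inv_nonneg.2 (pow_nonneg hN.le 2))
            _ = (gamma2 z m ^ 2)⁻¹ * (gamma2 z m * (R * ‖h‖)) * (gamma2 z m * R) := by ring
    _ = 2 * R ^ 2 * ‖h‖ := by
        have hNe : gamma2 z m ≠ 0 := hN.ne'
        field_simp
        ring

lemma continuous_gammaAttn (hR : 0 ≤ R) (hae : ∀ᵐ y ∂m, ‖y‖ ≤ R) :
    Continuous fun z : EuclideanSpace ℝ (Fin d) => gammaAttn z m := by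
  rw [continuous_iff_continuousAt]
  intro z
  exact (hasFDerivAt_gammaAttn hR hae z).continuousAt

lemma continuous_Dgamma (hR : 0 ≤ R) (hae : ∀ᵐ y ∂m, ‖y‖ ≤ R) :
    Continuous fun z : EuclideanSpace ℝ (Fin d) => Dgamma m z := by
  have hN := continuous_gamma2 hR hae
  have hNinv : Continuous fun z : EuclideanSpace ℝ (Fin d) => (gamma2 z m)⁻¹ :=
    hN.inv₀ (fun z => (gamma2_pos hae z).ne')
  have hNsqinv : Continuous fun z : EuclideanSpace ℝ (Fin d) => -(gamma2 z m ^ 2)⁻¹ :=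
    ((hN.pow 2).inv₀ (fun z => pow_ne_zero 2 (gamma2_pos hae z).ne')).neg
  apply Continuous.add
  · exact hNinv.smul (continuous_DVmap hR hae)
  · exact continuous_clm_apply₂
      ((ContinuousLinearMap.smulRightL ℝ (EuclideanSpace ℝ (Fin d))
        (EuclideanSpace ℝ (Fin d))).continuous.comp (hNsqinv.smul (continuous_DNmap hR hae)))
      (continuous_Vint hR hae)

/-! ### Matrix estimates -/

lemma frobNorm_nonneg {p q : ℕ} (M : Matrix (Fin p) (Fin q) ℝ) : 0 ≤ frobNorm M :=
  Real.sqrt_nonneg _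

lemma frobNorm_transpose {p q : ℕ} (M : Matrix (Fin p) (Fin q) ℝ) :
    frobNorm Mᵀ = frobNorm M := by
  rw [frobNorm, frobNorm, Finset.sum_comm]
  rfl

lemma continuous_frobNorm {p q : ℕ} :
    Continuous fun M : Matrix (Fin p) (Fin q) ℝ => frobNorm M := by
  apply Real.continuous_sqrt.comp
  apply continuous_finset_sum
  intro i _
  apply continuous_finset_sum
  intro j _
  exact ((continuous_apply j).comp (continuous_apply i)).pow 2

lemma norm_toEuclideanLin_apply_le {p q : ℕ} (M : Matrix (Fin p) (Fin q) ℝ)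
    (v : EuclideanSpace ℝ (Fin q)) :
    ‖Matrix.toEuclideanLin M v‖ ≤ frobNorm M * ‖v‖ := by
  rw [EuclideanSpace.norm_eq, EuclideanSpace.norm_eq, frobNorm,
    ← Real.sqrt_mul (by positivity)]
  apply Real.sqrt_le_sqrt
  have hcoord : ∀ i, Matrix.toEuclideanLin M v i = ∑ j, M i j * v j := fun i => rfl
  calc ∑ i, ‖Matrix.toEuclideanLin M v i‖ ^ 2
      = ∑ i, (∑ j, M i j * v j) ^ 2 := by
        apply Finset.sum_congr rfl
        intro i _
        rw [Real.norm_eq_abs, sq_abs, hcoord]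
    _ ≤ ∑ i, (∑ j, (M i j) ^ 2) * (∑ j, (v j) ^ 2) := by
        apply Finset.sum_le_sum
        intro i _
        exact Finset.sum_mul_sq_le_sq_mul_sq _ _ _
    _ = (∑ i, ∑ j, (M i j) ^ 2) * (∑ j, ‖v j‖ ^ 2) := by
        rw [← Finset.sum_mul]
        congr 1
        apply Finset.sum_congr rfl
        intro j _
        rw [Real.norm_eq_abs, sq_abs]

lemma norm_toEuclideanLin_mul_le {p q r : ℕ} (A : Matrix (Fin p) (Fin q) ℝ)
    (B : Matrix (Fin q) (Fin r) ℝ) (v : EuclideanSpace ℝ (Fin r)) :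
    ‖Matrix.toEuclideanLin (A * B) v‖ ≤ frobNorm A * (frobNorm B * ‖v‖) := by
  have h : Matrix.toEuclideanLin (A * B) v
      = Matrix.toEuclideanLin A (Matrix.toEuclideanLin B v) := by
    simp [Matrix.toEuclideanLin_apply, Matrix.mulVec_mulVec]
  rw [h]
  calc ‖Matrix.toEuclideanLin A (Matrix.toEuclideanLin B v)‖
      ≤ frobNorm A * ‖Matrix.toEuclideanLin B v‖ := norm_toEuclideanLin_apply_le _ _
    _ ≤ frobNorm A * (frobNorm B * ‖v‖) :=
        mul_le_mul_of_nonneg_left (norm_toEuclideanLin_apply_le _ _) (frobNorm_nonneg _)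

/-- `toEuclideanLin` as a continuous linear map, for square matrices. -/
noncomputable def matCLM {p : ℕ} (M : Matrix (Fin p) (Fin p) ℝ) :
    EuclideanSpace ℝ (Fin p) →L[ℝ] EuclideanSpace ℝ (Fin p) :=
  LinearMap.toContinuousLinearMap (Matrix.toEuclideanLin M)

lemma matCLM_apply {p : ℕ} (M : Matrix (Fin p) (Fin p) ℝ) (v : EuclideanSpace ℝ (Fin p)) :
    matCLM M v = Matrix.toEuclideanLin M v := rfl

/-- `matCLM` as a linear map on matrices. -/
noncomputable def matCLMₗ (p : ℕ) : Matrix (Fin p) (Fin p) ℝ →ₗ[ℝ]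
    (EuclideanSpace ℝ (Fin p) →L[ℝ] EuclideanSpace ℝ (Fin p)) :=
  (LinearMap.toContinuousLinearMap :
      (EuclideanSpace ℝ (Fin p) →ₗ[ℝ] EuclideanSpace ℝ (Fin p)) ≃ₗ[ℝ] _).toLinearMap.comp
    (Matrix.toEuclideanLin :
      Matrix (Fin p) (Fin p) ℝ ≃ₗ[ℝ] _).toLinearMap

lemma continuous_matCLM {p : ℕ} : Continuous fun M : Matrix (Fin p) (Fin p) ℝ => matCLM M := by
  have : (fun M : Matrix (Fin p) (Fin p) ℝ => matCLM M) = fun M => matCLMₗ p M := rfl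
  rw [this]
  exact (matCLMₗ p).continuous_of_finiteDimensional

lemma norm_matCLM_mul_le {p q : ℕ} (A : Matrix (Fin p) (Fin q) ℝ) (B : Matrix (Fin q) (Fin p) ℝ) :
    ‖matCLM (A * B)‖ ≤ frobNorm A * frobNorm B := by
  apply ContinuousLinearMap.opNorm_le_bound _
    (mul_nonneg (frobNorm_nonneg _) (frobNorm_nonneg _))
  intro v
  rw [matCLM_apply, mul_assoc]
  exact norm_toEuclideanLin_mul_le A B v

lemma continuous_clm_comp {X A B C : Type*} [TopologicalSpace X] [SeminormedAddCommGroup A]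
    [SeminormedAddCommGroup B] [SeminormedAddCommGroup C] [NormedSpace ℝ A] [NormedSpace ℝ B]
    [NormedSpace ℝ C] {f : X → B →L[ℝ] C} {g : X → A →L[ℝ] B}
    (hf : Continuous f) (hg : Continuous g) : Continuous fun x => (f x).comp (g x) :=
  isBoundedBilinearMap_comp.continuous.comp (hf.prodMk hg)

/-! ### Attention heads -/

instance {p q : ℕ} : BorelSpace (Matrix (Fin p) (Fin q) ℝ) :=
  inferInstanceAs (BorelSpace (Fin p → Fin q → ℝ))

instance {p q : ℕ} : SecondCountableTopology (Matrix (Fin p) (Fin q) ℝ) :=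
  inferInstanceAs (SecondCountableTopology (Fin p → Fin q → ℝ))

variable {k : ℕ}

/-- `θ_Kᵀ θ_Q`. -/
def Bmat (θ : Param k d) : Matrix (Fin d) (Fin d) ℝ := θ.2.1ᵀ * θ.1

/-- `θ_Oᵀ θ_V`. -/
def Amat (θ : Param k d) : Matrix (Fin d) (Fin d) ℝ := θ.2.2.2ᵀ * θ.2.2.1

lemma continuous_Bmat : Continuous fun θ : Param k d => Bmat θ :=
  ((continuous_fst.comp continuous_snd).matrix_transpose).matrix_mul continuous_fst

lemma continuous_Amat : Continuous fun θ : Param k d => Amat θ :=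
  ((continuous_snd.comp (continuous_snd.comp continuous_snd)).matrix_transpose).matrix_mul
    (continuous_fst.comp (continuous_snd.comp continuous_snd))

lemma attnHead_eq (β : ℝ) (w : EuclideanSpace ℝ (Fin d)) (θ : Param k d) :
    attnHead β w m θ = matCLM (Amat θ) (gammaAttn (β • matCLM (Bmat θ) w) m) := rfl

variable (m) in
/-- The derivative of `w ↦ ⟪a, attnHead β w m θ⟫` at `x`. -/
noncomputable def headCLM (β : ℝ) (x a : EuclideanSpace ℝ (Fin d)) (θ : Param k d) :
    EuclideanSpace ℝ (Fin d) →L[ℝ] ℝ :=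
  (innerSL ℝ a).comp ((matCLM (Amat θ)).comp
    ((Dgamma m (β • matCLM (Bmat θ) x)).comp (β • matCLM (Bmat θ))))

lemma hasFDerivAt_head (hR : 0 ≤ R) (hae : ∀ᵐ y ∂m, ‖y‖ ≤ R) (β : ℝ)
    (a : EuclideanSpace ℝ (Fin d)) (θ : Param k d) (w : EuclideanSpace ℝ (Fin d)) :
    HasFDerivAt (fun w => ⟪a, attnHead β w m θ⟫) (headCLM m β w a θ) w := by
  have hfun : (fun w : EuclideanSpace ℝ (Fin d) => β • matCLM (Bmat θ) w)
      = ⇑(β • matCLM (Bmat θ)) := by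
    funext w; simp
  have hB : HasFDerivAt (fun w : EuclideanSpace ℝ (Fin d) => β • matCLM (Bmat θ) w)
      (β • matCLM (Bmat θ)) w := by
    rw [hfun]; exact (β • matCLM (Bmat θ)).hasFDerivAt
  have hg := (hasFDerivAt_gammaAttn hR hae (β • matCLM (Bmat θ) w)).comp w hB
  have hA := ((matCLM (Amat θ)).hasFDerivAt).comp w hg
  have hi := ((innerSL ℝ a).hasFDerivAt).comp w hA
  have heq : (⇑(innerSL ℝ a) ∘ (⇑(matCLM (Amat θ)) ∘ ((fun z => gammaAttn z m) ∘
      (fun w : EuclideanSpace ℝ (Fin d) => β • matCLM (Bmat θ) w))))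
      = fun w => ⟪a, attnHead β w m θ⟫ := by
    funext w
    simp only [Function.comp_apply, attnHead_eq, innerSL_apply_apply, matCLM_apply]
  rw [heq] at hi
  exact hi

lemma norm_headCLM_le (hR : 0 ≤ R) (hae : ∀ᵐ y ∂m, ‖y‖ ≤ R) {R₂ R₃ β : ℝ}
    (hβ : 0 ≤ β) (hR₂ : 0 ≤ R₂) {θ : Param k d} (hθ : θ ∈ paramBall k d R₂)
    {a : EuclideanSpace ℝ (Fin d)} (ha : ‖a‖ ≤ R₃) (w : EuclideanSpace ℝ (Fin d)) :
    ‖headCLM m β w a θ‖ ≤ 2 * β * R ^ 2 * R₂ ^ 4 * R₃ := by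
  obtain ⟨hQ, hK, hV, hO⟩ := hθ
  have hnn2 : (0:ℝ) ≤ R₂ * R₂ := mul_nonneg hR₂ hR₂
  have hnnD : (0:ℝ) ≤ 2 * R ^ 2 := by positivity
  have hnnB : (0:ℝ) ≤ β * (R₂ * R₂) := mul_nonneg hβ hnn2
  have hnn3 : (0:ℝ) ≤ R₃ := le_trans (norm_nonneg a) ha
  have hA : ‖matCLM (Amat θ)‖ ≤ R₂ * R₂ := by
    refine le_trans (norm_matCLM_mul_le _ _) ?_
    rw [frobNorm_transpose]
    exact mul_le_mul hO hV (frobNorm_nonneg _) hR₂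
  have hBn : ‖matCLM (Bmat θ)‖ ≤ R₂ * R₂ := by
    refine le_trans (norm_matCLM_mul_le _ _) ?_
    rw [frobNorm_transpose]
    exact mul_le_mul hK hQ (frobNorm_nonneg _) hR₂
  have hsB : ‖β • matCLM (Bmat θ)‖ ≤ β * (R₂ * R₂) := by
    have hns := norm_smul β (matCLM (Bmat θ))
    rw [hns, Real.norm_eq_abs, abs_of_nonneg hβ]
    exact mul_le_mul_of_nonneg_left hBn hβ
  have hD : ‖Dgamma m (β • matCLM (Bmat θ) w)‖ ≤ 2 * R ^ 2 := norm_Dgamma_le hR hae _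
  have hi : ‖innerSL ℝ a‖ ≤ R₃ := by rw [innerSL_apply_norm]; exact ha
  calc ‖headCLM m β w a θ‖
      ≤ ‖innerSL ℝ a‖ * (‖matCLM (Amat θ)‖ *
          (‖Dgamma m (β • matCLM (Bmat θ) w)‖ * ‖β • matCLM (Bmat θ)‖)) := by
        refine le_trans (ContinuousLinearMap.opNorm_comp_le _ _) ?_
        apply mul_le_mul_of_nonneg_left _ (norm_nonneg _)
        refine le_trans (ContinuousLinearMap.opNorm_comp_le _ _) ?_
        apply mul_le_mul_of_nonneg_left _ (norm_nonneg _)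
        exact ContinuousLinearMap.opNorm_comp_le _ _
    _ ≤ R₃ * ((R₂ * R₂) * ((2 * R ^ 2) * (β * (R₂ * R₂)))) := by
        refine mul_le_mul hi ?_ (by positivity) hnn3
        refine mul_le_mul hA ?_ (by positivity) hnn2
        exact mul_le_mul hD hsB (norm_nonneg _) hnnD
    _ = 2 * β * R ^ 2 * R₂ ^ 4 * R₃ := by ring

lemma norm_attnHead_le (hR : 0 ≤ R) (hae : ∀ᵐ y ∂m, ‖y‖ ≤ R) {R₂ β : ℝ}
    (hR₂ : 0 ≤ R₂) {θ : Param k d} (hθ : θ ∈ paramBall k d R₂)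
    (w : EuclideanSpace ℝ (Fin d)) :
    ‖attnHead β w m θ‖ ≤ R₂ * (R₂ * R) := by
  obtain ⟨hQ, hK, hV, hO⟩ := hθ
  rw [attnHead_eq, matCLM_apply]
  refine le_trans (norm_toEuclideanLin_mul_le _ _ _) ?_
  rw [frobNorm_transpose]
  have h1 : frobNorm θ.2.2.1 * ‖gammaAttn (β • matCLM (Bmat θ) w) m‖ ≤ R₂ * R :=
    mul_le_mul hV (norm_gammaAttn_le hR hae _) (norm_nonneg _) hR₂
  exact mul_le_mul hO h1 (mul_nonneg (frobNorm_nonneg _) (norm_nonneg _)) hR₂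

lemma continuous_zmap (β : ℝ) (w : EuclideanSpace ℝ (Fin d)) :
    Continuous fun θ : Param k d => β • matCLM (Bmat θ) w :=
  (continuous_clm_apply₂ (continuous_matCLM.comp continuous_Bmat) continuous_const).const_smul β

lemma continuous_attnHead (hR : 0 ≤ R) (hae : ∀ᵐ y ∂m, ‖y‖ ≤ R) (β : ℝ)
    (w : EuclideanSpace ℝ (Fin d)) :
    Continuous fun θ : Param k d => attnHead β w m θ := by
  have : (fun θ : Param k d => attnHead β w m θ)
      = fun θ => matCLM (Amat θ) (gammaAttn (β • matCLM (Bmat θ) w) m) := rfl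
  rw [this]
  exact continuous_clm_apply₂ (continuous_matCLM.comp continuous_Amat)
    ((continuous_gammaAttn hR hae).comp (continuous_zmap β w))

lemma continuous_headCLM (hR : 0 ≤ R) (hae : ∀ᵐ y ∂m, ‖y‖ ≤ R) (β : ℝ)
    (x a : EuclideanSpace ℝ (Fin d)) :
    Continuous fun θ : Param k d => headCLM m β x a θ := by
  apply continuous_clm_comp continuous_const
  apply continuous_clm_comp (continuous_matCLM.comp continuous_Amat)
  apply continuous_clm_comp ((continuous_Dgamma hR hae).comp (continuous_zmap β x))
  exact (continuous_matCLM.comp continuous_Bmat).const_smul β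

lemma isClosed_paramBall {R₂ : ℝ} : IsClosed (paramBall k d R₂) := by
  have : paramBall k d R₂ = {θ : Param k d | frobNorm θ.1 ≤ R₂} ∩
      ({θ : Param k d | frobNorm θ.2.1 ≤ R₂} ∩
        ({θ : Param k d | frobNorm θ.2.2.1 ≤ R₂} ∩
          {θ : Param k d | frobNorm θ.2.2.2 ≤ R₂})) := by
    ext θ; simp [paramBall, Set.mem_setOf_eq, and_assoc]
  rw [this]
  refine IsClosed.inter (isClosed_le (continuous_frobNorm.comp continuous_fst)
    continuous_const) (IsClosed.inter (isClosed_le (continuous_frobNorm.comp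
    (continuous_fst.comp continuous_snd)) continuous_const) (IsClosed.inter
    (isClosed_le (continuous_frobNorm.comp (continuous_fst.comp
    (continuous_snd.comp continuous_snd))) continuous_const)
    (isClosed_le (continuous_frobNorm.comp (continuous_snd.comp
    (continuous_snd.comp continuous_snd))) continuous_const)))

end Stmt13Aux

/-- Boundedness of the gradient of the Hamiltonian `x ↦ ⟨a, Γ(x, m, ν)⟩`: the map is
differentiable on `ℝ^d` with `‖∇_x⟨a, Γ(x, m, ν)⟩‖ ≤ 2βR₁²R₂⁴R₃`. -/
theorem stmt_13 {k d : ℕ} (R₁ R₂ R₃ β : ℝ)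
    (hR₁ : 0 < R₁) (hR₂ : 0 < R₂) (hR₃ : 0 < R₃) (hβ : 0 < β)
    (m : Measure (EuclideanSpace ℝ (Fin d))) [IsProbabilityMeasure m]
    (ν : Measure (Param k d)) [IsProbabilityMeasure ν]
    (hm : m (Metric.closedBall 0 R₁) = 1)
    (hν : ν (paramBall k d R₂) = 1)
    (a : EuclideanSpace ℝ (Fin d)) (ha : a ∈ Metric.closedBall (0 : EuclideanSpace ℝ (Fin d)) R₃)
    (x : EuclideanSpace ℝ (Fin d)) :
    DifferentiableAt ℝ (fun w => ⟪a, attnGamma β w m ν⟫) x ∧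
      ‖gradient (fun w => ⟪a, attnGamma β w m ν⟫) x‖ ≤ 2 * β * R₁ ^ 2 * R₂ ^ 4 * R₃ := by
  classical
  have hae : ∀ᵐ y ∂m, ‖y‖ ≤ R₁ := Stmt13Aux.ae_norm_le hm
  have hR : (0:ℝ) ≤ R₁ := hR₁.le
  have haeθ : ∀ᵐ θ ∂ν, θ ∈ paramBall k d R₂ :=
    Stmt13Aux.ae_of_measure_eq_one Stmt13Aux.isClosed_paramBall.measurableSet hν
  have ha' : ‖a‖ ≤ R₃ := by simpa [Metric.mem_closedBall, dist_zero_right] using ha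
  have hnn3 : (0:ℝ) ≤ R₃ := le_trans (norm_nonneg a) ha'
  set L := 2 * β * R₁ ^ 2 * R₂ ^ 4 * R₃ with hL
  have hint : ∀ w, Integrable (fun θ => attnHead β w m θ) ν := by
    intro w
    apply Integrable.mono' (integrable_const (R₂ * (R₂ * R₁)))
      ((Stmt13Aux.continuous_attnHead hR hae β w).aestronglyMeasurable)
    filter_upwards [haeθ] with θ hθ
    exact Stmt13Aux.norm_attnHead_le hR hae hR₂.le hθ w
  have hfun : (fun w => ⟪a, attnGamma β w m ν⟫)
      = fun w => ∫ θ, ⟪a, attnHead β w m θ⟫ ∂ν := by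
    funext w
    rw [attnGamma]
    exact (integral_inner (hint w) a).symm
  have hFint : Integrable (fun θ => ⟪a, attnHead β x m θ⟫) ν := by
    apply Integrable.mono' (integrable_const (R₃ * (R₂ * (R₂ * R₁))))
      ((continuous_const.inner (Stmt13Aux.continuous_attnHead hR hae β x)).aestronglyMeasurable)
    filter_upwards [haeθ] with θ hθ
    rw [Real.norm_eq_abs]
    calc |⟪a, attnHead β x m θ⟫| ≤ ‖a‖ * ‖attnHead β x m θ‖ := abs_real_inner_le_norm _ _
      _ ≤ R₃ * (R₂ * (R₂ * R₁)) :=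
          mul_le_mul ha' (Stmt13Aux.norm_attnHead_le hR hae hR₂.le hθ x) (norm_nonneg _) hnn3
  have hlip : ∀ᵐ θ ∂ν, LipschitzOnWith (Real.nnabs L)
      (fun w => ⟪a, attnHead β w m θ⟫) (Metric.ball x 1) := by
    filter_upwards [haeθ] with θ hθ
    apply Convex.lipschitzOnWith_of_nnnorm_hasFDerivWithin_le
      (f' := fun w => Stmt13Aux.headCLM m β w a θ)
      (fun w _ => (Stmt13Aux.hasFDerivAt_head hR hae β a θ w).hasFDerivWithinAt)
      ?_ (convex_ball x 1)
    intro w _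
    rw [← NNReal.coe_le_coe, coe_nnnorm, Real.coe_nnabs]
    exact le_trans (Stmt13Aux.norm_headCLM_le hR hae hβ.le hR₂.le hθ ha' w) (le_abs_self L)
  have key := hasFDerivAt_integral_of_dominated_loc_of_lip
    (F := fun w θ => ⟪a, attnHead β w m θ⟫)
    (F' := fun θ => Stmt13Aux.headCLM m β x a θ)
    (x₀ := x) (bound := fun _ => L) (s := Metric.ball x 1) (Metric.ball_mem_nhds x zero_lt_one)
    (Filter.Eventually.of_forall fun w =>
      (continuous_const.inner (Stmt13Aux.continuous_attnHead hR hae β w)).aestronglyMeasurable)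
    hFint ((Stmt13Aux.continuous_headCLM hR hae β x a).aestronglyMeasurable)
    hlip (integrable_const (μ := ν) L)
    (Filter.Eventually.of_forall fun θ => Stmt13Aux.hasFDerivAt_head hR hae β a θ x)
  obtain ⟨hFint', hkey⟩ := key
  rw [← hfun] at hkey
  refine ⟨hkey.differentiableAt, ?_⟩
  have hgrad : ‖gradient (fun w => ⟪a, attnGamma β w m ν⟫) x‖
      = ‖fderiv ℝ (fun w => ⟪a, attnGamma β w m ν⟫) x‖ :=
    (InnerProductSpace.toDual ℝ (EuclideanSpace ℝ (Fin d))).symm.norm_map _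
  rw [hgrad, hkey.fderiv]
  refine le_trans (norm_integral_le_of_norm_le (integrable_const L) ?_) ?_
  · filter_upwards [haeθ] with θ hθ
    exact Stmt13Aux.norm_headCLM_le hR hae hβ.le hR₂.le hθ ha' x
  · rw [integral_const, probReal_univ]
    simp
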